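/- If f : ℝ → ℝ is convex, then the map A ↦ tr f(A) is convex on the real vector space of n×n Hermitian matrices. -/

import Mathlib

open Matrix
open scoped ComplexOrder

/-- Spectral functional calculus for Hermitian matrices (junk value `0` otherwise). -/
noncomputable def matFun {d : ℕ} (f : ℝ → ℝ) (A : Matrix (Fin d) (Fin d) ℂ) :
    Matrix (Fin d) (Fin d) ℂ :=
  if hA : A.IsHermitian then
    (hA.eigenvectorUnitary : Matrix (Fin d) (Fin d) ℂ) *
      Matrix.diagonal (fun i => (f (hA.eigenvalues i) : ℂ)) *
      (hA.eigenvectorUnitary : Matrix (Fin d) (Fin d) ℂ)ᴴ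
  else 0

lemma trace_matFun {d : ℕ} (f : ℝ → ℝ) {M : Matrix (Fin d) (Fin d) ℂ} (hM : M.IsHermitian) :
    (matFun f M).trace = ∑ i, (f (hM.eigenvalues i) : ℂ) := by
  rw [matFun, dif_pos hM, Matrix.trace_mul_cycle, ← Matrix.star_eq_conjTranspose,
    Unitary.coe_star_mul_self, one_mul, Matrix.trace_diagonal]

lemma trace_matFun_re {d : ℕ} (f : ℝ → ℝ) {M : Matrix (Fin d) (Fin d) ℂ} (hM : M.IsHermitian) :
    (matFun f M).trace.re = ∑ i, f (hM.eigenvalues i) := by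
  rw [trace_matFun f hM, Complex.re_sum]
  simp

lemma diag_entry_eq {d : ℕ} (lam : Fin d → ℝ) (P : Matrix (Fin d) (Fin d) ℂ) (i : Fin d) :
    ((Pᴴ * Matrix.diagonal (fun j => (lam j : ℂ)) * P) i i).re
      = ∑ j, Complex.normSq (P j i) * lam j := by
  rw [mul_assoc, Matrix.mul_apply, Complex.re_sum]
  refine Finset.sum_congr rfl fun j _ => ?_
  rw [Matrix.conjTranspose_apply, Matrix.diagonal_mul]
  have : (starRingEnd ℂ) (P j i) * ((lam j : ℂ) * P j i)
      = ((Complex.normSq (P j i) * lam j : ℝ) : ℂ) := by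
    push_cast [Complex.normSq_eq_conj_mul_self]
    ring
  rw [Complex.star_def, this, Complex.ofReal_re]

lemma jensen_step {d : ℕ} (f : ℝ → ℝ) (hf : ConvexOn ℝ Set.univ f) (lam : Fin d → ℝ)
    (P : Matrix (Fin d) (Fin d) ℂ) (h1 : Pᴴ * P = 1) (h2 : P * Pᴴ = 1) :
    ∑ i, f (((Pᴴ * Matrix.diagonal (fun j => (lam j : ℂ)) * P) i i).re)
      ≤ ∑ i, f (lam i) := by
  have hrow : ∀ i, ∑ j, Complex.normSq (P j i) = 1 := by
    intro i
    have h1' : (Pᴴ * P) i i = 1 := by rw [h1]; simp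
    rw [Matrix.mul_apply] at h1'
    have := congrArg Complex.re h1'
    rw [Complex.re_sum] at this
    simpa [Matrix.conjTranspose_apply, Complex.star_def, Complex.normSq_eq_conj_mul_self,
      Complex.ofReal_re, Complex.normSq_apply] using this
  have hcol : ∀ j, ∑ i, Complex.normSq (P j i) = 1 := by
    intro j
    have h2' : (P * Pᴴ) j j = 1 := by rw [h2]; simp
    rw [Matrix.mul_apply] at h2'
    have := congrArg Complex.re h2'
    rw [Complex.re_sum] at this
    simpa [Matrix.conjTranspose_apply, Complex.star_def, Complex.normSq_eq_conj_mul_self,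
      mul_comm, Complex.normSq_apply] using this
  calc ∑ i, f (((Pᴴ * Matrix.diagonal (fun j => (lam j : ℂ)) * P) i i).re)
      ≤ ∑ i, ∑ j, Complex.normSq (P j i) * f (lam j) := by
        refine Finset.sum_le_sum fun i _ => ?_
        rw [diag_entry_eq]
        have := hf.map_sum_le (t := Finset.univ) (w := fun j => Complex.normSq (P j i))
          (p := lam) (fun j _ => Complex.normSq_nonneg _) (hrow i) (fun j _ => Set.mem_univ _)
        simpa [smul_eq_mul] using this
    _ = ∑ j, f (lam j) := by
        rw [Finset.sum_comm]
        refine Finset.sum_congr rfl fun j _ => ?_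
        rw [← Finset.sum_mul, hcol j, one_mul]

/-- Peierls inequality. -/
lemma peierls {d : ℕ} (f : ℝ → ℝ) (hf : ConvexOn ℝ Set.univ f)
    {M : Matrix (Fin d) (Fin d) ℂ} (hM : M.IsHermitian) (W : Matrix.unitaryGroup (Fin d) ℂ) :
    ∑ i, f ((((W : Matrix (Fin d) (Fin d) ℂ)ᴴ * M * (W : Matrix (Fin d) (Fin d) ℂ)) i i).re)
      ≤ ∑ i, f (hM.eigenvalues i) := by
  have hUU : (hM.eigenvectorUnitary : Matrix (Fin d) (Fin d) ℂ) *
      (hM.eigenvectorUnitary : Matrix (Fin d) (Fin d) ℂ)ᴴ = 1 := by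
    rw [← Matrix.star_eq_conjTranspose]; exact Unitary.coe_mul_star_self _
  have hUU' : (hM.eigenvectorUnitary : Matrix (Fin d) (Fin d) ℂ)ᴴ *
      (hM.eigenvectorUnitary : Matrix (Fin d) (Fin d) ℂ) = 1 := by
    rw [← Matrix.star_eq_conjTranspose]; exact Unitary.coe_star_mul_self _
  have hWW : (W : Matrix (Fin d) (Fin d) ℂ)ᴴ * W = 1 := by
    rw [← Matrix.star_eq_conjTranspose]; exact Unitary.coe_star_mul_self _
  have hWW' : (W : Matrix (Fin d) (Fin d) ℂ) * (W : Matrix (Fin d) (Fin d) ℂ)ᴴ = 1 := by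
    rw [← Matrix.star_eq_conjTranspose]; exact Unitary.coe_mul_star_self _
  have hPP : ((hM.eigenvectorUnitary : Matrix (Fin d) (Fin d) ℂ)ᴴ *
        (W : Matrix (Fin d) (Fin d) ℂ))ᴴ *
      ((hM.eigenvectorUnitary : Matrix (Fin d) (Fin d) ℂ)ᴴ *
        (W : Matrix (Fin d) (Fin d) ℂ)) = 1 := by
    rw [Matrix.conjTranspose_mul, Matrix.conjTranspose_conjTranspose,
      mul_assoc, ← mul_assoc _ _ (W : Matrix (Fin d) (Fin d) ℂ), hUU, one_mul, hWW]
  have hPP' : ((hM.eigenvectorUnitary : Matrix (Fin d) (Fin d) ℂ)ᴴ *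
        (W : Matrix (Fin d) (Fin d) ℂ)) *
      ((hM.eigenvectorUnitary : Matrix (Fin d) (Fin d) ℂ)ᴴ *
        (W : Matrix (Fin d) (Fin d) ℂ))ᴴ = 1 := by
    rw [Matrix.conjTranspose_mul, Matrix.conjTranspose_conjTranspose,
      mul_assoc, ← mul_assoc (W : Matrix (Fin d) (Fin d) ℂ), hWW', one_mul, hUU']
  have key : (W : Matrix (Fin d) (Fin d) ℂ)ᴴ * M * (W : Matrix (Fin d) (Fin d) ℂ)
      = ((hM.eigenvectorUnitary : Matrix (Fin d) (Fin d) ℂ)ᴴ *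
          (W : Matrix (Fin d) (Fin d) ℂ))ᴴ *
        Matrix.diagonal (fun j => (hM.eigenvalues j : ℂ)) *
        ((hM.eigenvectorUnitary : Matrix (Fin d) (Fin d) ℂ)ᴴ *
          (W : Matrix (Fin d) (Fin d) ℂ)) := by
    have hMs := hM.spectral_theorem
    rw [Unitary.conjStarAlgAut_apply, Matrix.star_eq_conjTranspose] at hMs
    rw [Matrix.conjTranspose_mul, Matrix.conjTranspose_conjTranspose]
    conv_lhs => rw [hMs]
    simp only [mul_assoc]
    rfl
  rw [key]
  exact jensen_step f hf _ _ hPP hPP'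

/-- Convexity of $A \mapsto \mathrm{tr} f(A)$ on Hermitian matrices. -/
theorem trace_matFun_convex {n : ℕ} (f : ℝ → ℝ) (hf : ConvexOn ℝ Set.univ f)
    (A B : Matrix (Fin n) (Fin n) ℂ) (hA : A.IsHermitian) (hB : B.IsHermitian) :
    (matFun f ((2 : ℝ)⁻¹ • (A + B))).trace.re
      ≤ ((matFun f A).trace.re + (matFun f B).trace.re) / 2 := by
  have hC : ((2 : ℝ)⁻¹ • (A + B)).IsHermitian := by
    rw [Matrix.IsHermitian, Matrix.conjTranspose_smul, star_trivial, (hA.add hB).eq]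
  set W := hC.eigenvectorUnitary with hW
  -- eigenvalues of C are the diagonal entries of Wᴴ C W
  have hdiag : (W : Matrix (Fin n) (Fin n) ℂ)ᴴ * ((2 : ℝ)⁻¹ • (A + B)) *
      (W : Matrix (Fin n) (Fin n) ℂ) = Matrix.diagonal (fun i => (hC.eigenvalues i : ℂ)) := by
    have := hC.conjStarAlgAut_star_eigenvectorUnitary
    rw [Unitary.conjStarAlgAut_apply, Unitary.coe_star, star_star,
      Matrix.star_eq_conjTranspose] at this
    rw [this]
    rfl
  have hmid : ∀ i, hC.eigenvalues i
      = (2 : ℝ)⁻¹ * (((W : Matrix (Fin n) (Fin n) ℂ)ᴴ * A * W) i i).re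
        + (2 : ℝ)⁻¹ * (((W : Matrix (Fin n) (Fin n) ℂ)ᴴ * B * W) i i).re := by
    intro i
    have h1 : ((W : Matrix (Fin n) (Fin n) ℂ)ᴴ * ((2 : ℝ)⁻¹ • (A + B)) *
        (W : Matrix (Fin n) (Fin n) ℂ)) i i = (hC.eigenvalues i : ℂ) := by
      rw [hdiag]; simp
    have h2 : (W : Matrix (Fin n) (Fin n) ℂ)ᴴ * ((2 : ℝ)⁻¹ • (A + B)) *
        (W : Matrix (Fin n) (Fin n) ℂ)
        = (2 : ℝ)⁻¹ • ((W : Matrix (Fin n) (Fin n) ℂ)ᴴ * A * W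
            + (W : Matrix (Fin n) (Fin n) ℂ)ᴴ * B * W) := by
      rw [Matrix.mul_smul, Matrix.smul_mul, Matrix.mul_add, Matrix.add_mul]
    rw [h2] at h1
    have := congrArg Complex.re h1
    simp only [Matrix.smul_apply, Matrix.add_apply, Complex.real_smul, Complex.ofReal_re,
      Complex.mul_re, Complex.ofReal_im, Complex.add_re, Complex.add_im] at this
    rw [← this]
    ring
  have htr : (matFun f ((2 : ℝ)⁻¹ • (A + B))).trace.re = ∑ i, f (hC.eigenvalues i) :=
    trace_matFun_re f hC
  have step1 : ∑ i, f (hC.eigenvalues i)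
      ≤ (∑ i, f ((((W : Matrix (Fin n) (Fin n) ℂ)ᴴ * A * W) i i).re)
        + ∑ i, f ((((W : Matrix (Fin n) (Fin n) ℂ)ᴴ * B * W) i i).re)) / 2 := by
    have : ∀ i, f (hC.eigenvalues i)
        ≤ (f ((((W : Matrix (Fin n) (Fin n) ℂ)ᴴ * A * W) i i).re)
          + f ((((W : Matrix (Fin n) (Fin n) ℂ)ᴴ * B * W) i i).re)) / 2 := by
      intro i
      have hcv := hf.2 (Set.mem_univ ((((W : Matrix (Fin n) (Fin n) ℂ)ᴴ * A * W) i i).re))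
        (Set.mem_univ ((((W : Matrix (Fin n) (Fin n) ℂ)ᴴ * B * W) i i).re))
        (by norm_num : (0:ℝ) ≤ 2⁻¹) (by norm_num : (0:ℝ) ≤ 2⁻¹) (by norm_num)
      simp only [smul_eq_mul] at hcv
      rw [hmid i]
      linarith
    calc ∑ i, f (hC.eigenvalues i)
        ≤ ∑ i, (f ((((W : Matrix (Fin n) (Fin n) ℂ)ᴴ * A * W) i i).re)
          + f ((((W : Matrix (Fin n) (Fin n) ℂ)ᴴ * B * W) i i).re)) / 2 :=
          Finset.sum_le_sum fun i _ => this i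
      _ = _ := by rw [← Finset.sum_div, Finset.sum_add_distrib]
  have stepA := peierls f hf hA W
  have stepB := peierls f hf hB W
  rw [htr, trace_matFun_re f hA, trace_matFun_re f hB]
  calc ∑ i, f (hC.eigenvalues i)
      ≤ (∑ i, f ((((W : Matrix (Fin n) (Fin n) ℂ)ᴴ * A * W) i i).re)
        + ∑ i, f ((((W : Matrix (Fin n) (Fin n) ℂ)ᴴ * B * W) i i).re)) / 2 := step1
    _ ≤ (∑ i, f (hA.eigenvalues i) + ∑ i, f (hB.eigenvalues i)) / 2 := by
        apply div_le_div_of_nonneg_right ?_ (by norm_num)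
        · exact add_le_add stepA stepB
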